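/- Identification of the average spillover effect on exposed treated units (the population coefficient γ_1 in the modified two-way fixed-effects model): suppose S : Ω → {0,1} is a measurable spillover-region indicator satisfying locality (S(ω) = 0 implies h(ω) = 0), with P(D=1, S=1) > 0 and P(D=1, S=0) > 0. If No Anticipation, Cell Parallel Trends, and Homogeneity of the Direct Effect across S hold, then E[Y_1^obs − Y_0^obs | D=1, S=1] − E[Y_1^obs − Y_0^obs | D=1, S=0] = E[Y_1(1, h(·))(·) − Y_1(1,0)(·) | D=1, S=1]. -/

import Mathlib

open MeasureTheory

/-- Conditional mean of `X` given the event `A`: `E[X | A] = (1/P(A)) ∫_A X dP`. -/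
noncomputable def condMean {Ω : Type*} [MeasurableSpace Ω] (P : Measure Ω)
    (A : Set Ω) (X : Ω → ℝ) : ℝ :=
  (P A).toReal⁻¹ * ∫ ω in A, X ω ∂P

/-- Set integral over an arbitrary (possibly non-measurable) set of finite measure
vanishes for a `P`-integrable function vanishing on that set. -/
lemma setIntegral_eq_zero_of_eqOn_zero {Ω : Type*} [MeasurableSpace Ω] (P : Measure Ω)
    [IsFiniteMeasure P] (A : Set Ω) {f : Ω → ℝ} (hf : Integrable f P)
    (h0 : ∀ ω ∈ A, f ω = 0) : ∫ ω in A, f ω ∂P = 0 := by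
  have hA : P A ≠ ⊤ := measure_ne_top P A
  rw [← Measure.restrict_toMeasurable hA]
  have hmk := hf.1
  set ψ := hmk.mk f with hψ
  have hψm : StronglyMeasurable ψ := hmk.stronglyMeasurable_mk
  have hfg : f =ᵐ[P] ψ := hmk.ae_eq_mk
  have h1 : ∫ ω in toMeasurable P A, f ω ∂P = ∫ ω in toMeasurable P A, ψ ω ∂P :=
    integral_congr_ae (ae_restrict_of_ae hfg)
  rw [h1]
  have hset : MeasurableSet {ω | ψ ω ≠ 0} := by
    have h1 : MeasurableSet (ψ ⁻¹' {0}) := hψm.measurable (MeasurableSet.singleton (0:ℝ))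
    have h2 := h1.compl
    convert h2 using 1
    rfl
  have hnull : P (A ∩ {ω | ψ ω ≠ 0}) = 0 := by
    refine measure_mono_null ?_ (ae_iff.1 hfg)
    intro ω ⟨hωA, hωψ⟩
    simp only [Set.mem_setOf_eq]
    rw [h0 ω hωA]
    exact fun hc => hωψ hc.symm
  have hnullT : P (toMeasurable P A ∩ {ω | ψ ω ≠ 0}) = 0 := by
    rw [Measure.measure_toMeasurable_inter hset hA]; exact hnull
  have hae : ψ =ᵐ[P.restrict (toMeasurable P A)] 0 := by
    rw [Filter.EventuallyEq, ae_restrict_iff' (measurableSet_toMeasurable P A)]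
    rw [ae_iff]
    refine measure_mono_null ?_ hnullT
    intro ω hω
    simp only [Set.mem_setOf_eq, Classical.not_imp, Pi.zero_apply] at hω
    exact ⟨hω.1, hω.2⟩
  calc ∫ ω in toMeasurable P A, ψ ω ∂P = ∫ ω in toMeasurable P A, (0:ℝ) ∂P :=
        integral_congr_ae hae
    _ = 0 := integral_zero _ _

lemma setIntegral_congr_on {Ω : Type*} [MeasurableSpace Ω] (P : Measure Ω)
    [IsFiniteMeasure P] (A : Set Ω) {f g : Ω → ℝ} (hf : Integrable f P)
    (hg : Integrable g P) (h : ∀ ω ∈ A, f ω = g ω) :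
    ∫ ω in A, f ω ∂P = ∫ ω in A, g ω ∂P := by
  have := setIntegral_eq_zero_of_eqOn_zero P A (hf.sub hg)
    (fun ω hω => by simp [Pi.sub_apply, h ω hω])
  simp only [Pi.sub_apply] at this
  rw [integral_sub (hf.restrict) (hg.restrict)] at this
  linarith

lemma condMean_add {Ω : Type*} [MeasurableSpace Ω] (P : Measure Ω) (A : Set Ω)
    {u v : Ω → ℝ} (hu : Integrable u P) (hv : Integrable v P) :
    condMean P A (fun ω => u ω + v ω) = condMean P A u + condMean P A v := by
  unfold condMean
  rw [integral_add hu.restrict hv.restrict, mul_add]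

lemma condMean_congr_on {Ω : Type*} [MeasurableSpace Ω] (P : Measure Ω)
    [IsFiniteMeasure P] (A : Set Ω) {f g : Ω → ℝ} (hf : Integrable f P)
    (hg : Integrable g P) (h : ∀ ω ∈ A, f ω = g ω) :
    condMean P A f = condMean P A g := by
  unfold condMean
  rw [setIntegral_congr_on P A hf hg h]

/-- Identification of the average spillover effect on exposed treated units
(the population coefficient `γ_1` in the modified TWFE model). -/
theorem spillover_on_treated_identification
    {Ω : Type*} [MeasurableSpace Ω] (P : Measure Ω) [IsProbabilityMeasure P]
    {H : Type*} [Zero H]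
    (D : Ω → Fin 2) (h : Ω → H) (S : Ω → Fin 2)
    (Y : Fin 2 → Fin 2 → H → Ω → ℝ)
    (hSmeas : Measurable S)
    -- spillovers are local: unexposed outside the spillover region
    (hLocal : ∀ ω, S ω = 0 → h ω = 0)
    (hD1 : 0 < P {ω | D ω = 1}) (hD0 : 0 < P {ω | D ω = 0})
    (hD1S1 : 0 < P {ω | D ω = 1 ∧ S ω = 1})
    (hD1S0 : 0 < P {ω | D ω = 1 ∧ S ω = 0})
    -- integrability of all random variables appearing in the stated expectations
    (hIntArm : ∀ (t d : Fin 2) (e : H), Integrable (Y t d e) P)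
    (hIntObs : ∀ t : Fin 2, Integrable (fun ω => Y t (D ω) (h ω) ω) P)
    (hIntExp : ∀ d : Fin 2, Integrable (fun ω => Y 1 d (h ω) ω) P)
    -- No Anticipation
    (hNoAnt : ∀ (d : Fin 2) (e : H) (ω : Ω), Y 0 d e ω = Y 0 0 0 ω)
    -- Cell Parallel Trends
    (hPT : ∀ d s : Fin 2, 0 < P {ω | D ω = d ∧ S ω = s} →
        condMean P {ω | D ω = d ∧ S ω = s} (fun ω => Y 1 0 0 ω - Y 0 0 0 ω)
        = ∫ ω, (Y 1 0 0 ω - Y 0 0 0 ω) ∂P)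
    -- Homogeneity of the direct effect across S
    (hHom : ∀ s : Fin 2, 0 < P {ω | D ω = 1 ∧ S ω = s} →
        condMean P {ω | D ω = 1 ∧ S ω = s} (fun ω => Y 1 1 0 ω - Y 1 0 0 ω)
        = condMean P {ω | D ω = 1} (fun ω => Y 1 1 0 ω - Y 1 0 0 ω)) :
    condMean P {ω | D ω = 1 ∧ S ω = 1}
        (fun ω => Y 1 (D ω) (h ω) ω - Y 0 (D ω) (h ω) ω)
      - condMean P {ω | D ω = 1 ∧ S ω = 0}
          (fun ω => Y 1 (D ω) (h ω) ω - Y 0 (D ω) (h ω) ω)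
    = condMean P {ω | D ω = 1 ∧ S ω = 1} (fun ω => Y 1 1 (h ω) ω - Y 1 1 0 ω) := by
  set A1 := {ω | D ω = 1 ∧ S ω = 1} with hA1
  set A0 := {ω | D ω = 1 ∧ S ω = 0} with hA0
  have hfInt : Integrable (fun ω => Y 1 (D ω) (h ω) ω - Y 0 (D ω) (h ω) ω) P :=
    (hIntObs 1).sub (hIntObs 0)
  have hgInt : Integrable (fun ω => Y 1 1 (h ω) ω - Y 1 1 0 ω) P :=
    (hIntExp 1).sub (hIntArm 1 1 0)
  have hmInt : Integrable (fun ω => Y 1 1 0 ω - Y 1 0 0 ω) P :=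
    (hIntArm 1 1 0).sub (hIntArm 1 0 0)
  have hcInt : Integrable (fun ω => Y 1 0 0 ω - Y 0 0 0 ω) P :=
    (hIntArm 1 0 0).sub (hIntArm 0 0 0)
  have hmcInt : Integrable (fun ω => (Y 1 1 0 ω - Y 1 0 0 ω) + (Y 1 0 0 ω - Y 0 0 0 ω)) P :=
    hmInt.add hcInt
  have e1 : condMean P A1 (fun ω => Y 1 (D ω) (h ω) ω - Y 0 (D ω) (h ω) ω)
      = condMean P A1 (fun ω => Y 1 1 (h ω) ω - Y 1 1 0 ω)
        + condMean P A1 (fun ω => Y 1 1 0 ω - Y 1 0 0 ω)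
        + condMean P A1 (fun ω => Y 1 0 0 ω - Y 0 0 0 ω) := by
    have step : condMean P A1 (fun ω => Y 1 (D ω) (h ω) ω - Y 0 (D ω) (h ω) ω)
        = condMean P A1 (fun ω => (Y 1 1 (h ω) ω - Y 1 1 0 ω)
            + ((Y 1 1 0 ω - Y 1 0 0 ω) + (Y 1 0 0 ω - Y 0 0 0 ω))) := by
      refine condMean_congr_on P A1 hfInt (hgInt.add hmcInt) ?_
      intro ω hω
      obtain ⟨hωD, hωS⟩ := hω
      rw [hωD, hNoAnt 1 (h ω) ω]
      ring
    rw [step, condMean_add P A1 hgInt hmcInt, condMean_add P A1 hmInt hcInt]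
    ring
  have e0 : condMean P A0 (fun ω => Y 1 (D ω) (h ω) ω - Y 0 (D ω) (h ω) ω)
      = condMean P A0 (fun ω => Y 1 1 0 ω - Y 1 0 0 ω)
        + condMean P A0 (fun ω => Y 1 0 0 ω - Y 0 0 0 ω) := by
    have step : condMean P A0 (fun ω => Y 1 (D ω) (h ω) ω - Y 0 (D ω) (h ω) ω)
        = condMean P A0 (fun ω => (Y 1 1 0 ω - Y 1 0 0 ω) + (Y 1 0 0 ω - Y 0 0 0 ω)) := by
      refine condMean_congr_on P A0 hfInt hmcInt ?_
      intro ω hω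
      obtain ⟨hωD, hωS⟩ := hω
      rw [hωD, hLocal ω hωS, hNoAnt 1 0 ω]
      ring
    rw [step, condMean_add P A0 hmInt hcInt]
  have hHom1 := hHom 1 hD1S1
  have hHom0 := hHom 0 hD1S0
  have hPT1 := hPT 1 1 hD1S1
  have hPT0 := hPT 1 0 hD1S0
  rw [e1, e0, ← hA1, ← hA0] at *
  rw [hHom1, hHom0, hPT1, hPT0]
  ring
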